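/- Discrete inf-sup condition: there exists β* > 0, independent of the mesh size h, such that for all (s, v) ∈ ℚ_h × U_h one has sup_{q ∈ 𝔖_h, q ≠ 0} [ (s, j_ω⁺ q) + (v, div j_ω⁺ q) ] / ‖q‖_𝔖 ≥ β* ( ‖s‖_{0,Ω} + ‖v‖_{0,Ω} ). -/
import Mathlib


/-!
Abstract Hilbert-space model of the stress-based mixed formulation of Zener's
model in linear viscoelasticity (elastic/viscoelastic composite materials).

* `H`    models the tensor space `𝕃²(Ω) = L²(Ω)^{d×d}` (with the pair space
         `H × H` modelling `𝔏²(Ω)`, resp. `𝔏²_V(Ω)` when the second component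
         is restricted to `HV`);
* `U`    models the vector space `L²(Ω)^d`;
* `HV`   models `𝕃²(Ω_V)`, the tensors vanishing on the purely elastic part `Ω_E`;
* `Hdiv` models `ℍ(div, Ω)` and `dvg` the (row-wise) divergence operator;
* `mulω` models pointwise multiplication by the piecewise constant relaxation
         time `ω ≥ 0` and `mulωtinv` multiplication by `ω̃⁻¹`;
* `Hsym` models the symmetric tensors, `Q` the skew-symmetric tensors `ℚ`;
* `Ainv`, `Vinv` model the fourth order tensors `𝒜 = 𝒞⁻¹`, `𝒱 = (𝒟 - 𝒞)⁻¹`;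
* `mulρinv` models multiplication by `ρ⁻¹` (`ρ` the piecewise constant mass density);
* `ntr`  models the normal-trace duality pairing `(φ, τ) ↦ ⟨φ, τ n⟩_Γ`
         with `G` modelling `H^{1/2}(Γ)`.
-/

noncomputable section

open scoped RealInnerProductSpace
open Set Filter MeasureTheory

section Defs

variable {H : Type*} [NormedAddCommGroup H] [InnerProductSpace ℝ H]
variable {U : Type*} [NormedAddCommGroup U] [InnerProductSpace ℝ U]

/-- `j_ω⁺(η, τ) := η + ωτ`. -/
def jplus (mulω : H →L[ℝ] H) (q : H × H) : H := q.1 + mulω q.2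

/-- `j_ω(η, τ) := (η, ωτ)`. -/
def jomega (mulω : H →L[ℝ] H) (q : H × H) : H × H := (q.1, mulω q.2)

/-- `π₂(η, τ) := (0, τ)`. -/
def pi2 (q : H × H) : H × H := (0, q.2)

/-- the `𝔏²(Ω) = 𝕃² × 𝕃²` norm of a pair of tensor fields. -/
def pnorm (q : H × H) : ℝ := Real.sqrt (‖q.1‖ ^ 2 + ‖q.2‖ ^ 2)

/-- membership in `𝔖 = {q ∈ 𝔏²_V(Ω) : j_ω⁺ q ∈ ℍ(div, Ω)}`. -/
def memS (HV Hdiv : Submodule ℝ H) (mulω : H →L[ℝ] H) (q : H × H) : Prop :=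
  q.2 ∈ HV ∧ jplus mulω q ∈ Hdiv

/-- membership in `𝔖_sym = 𝔖 ∩ 𝔏²_sym(Ω)`. -/
def memSsym (HV Hdiv Hsym : Submodule ℝ H) (mulω : H →L[ℝ] H) (q : H × H) : Prop :=
  memS HV Hdiv mulω q ∧ jplus mulω q ∈ Hsym

/-- the `𝔖`-norm: `‖q‖²_𝔖 = ‖η‖² + ‖ωτ‖² + ‖div(η + ωτ)‖²`. -/
def Snorm (mulω : H →L[ℝ] H) (dvg : H →ₗ[ℝ] U) (q : H × H) : ℝ :=
  Real.sqrt (‖q.1‖ ^ 2 + ‖mulω q.2‖ ^ 2 + ‖dvg (jplus mulω q)‖ ^ 2)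

/-- the `ℍ(div, Ω)`-norm. -/
def hdivNorm (dvg : H →ₗ[ℝ] U) (τ : H) : ℝ := Real.sqrt (‖τ‖ ^ 2 + ‖dvg τ‖ ^ 2)

/-- the bilinear form `A(p, q) = (𝒜γ, η) + (𝒱ζ, τ)`. -/
def Abil (Ainv Vinv : H →L[ℝ] H) (p q : H × H) : ℝ :=
  ⟪Ainv p.1, q.1⟫ + ⟪Vinv p.2, q.2⟫

/-- the `ρ`-weighted inner product `(u, v)_ρ := (ρ⁻¹ u, v)`. -/
def rinner (mulρinv : U →L[ℝ] U) (u v : U) : ℝ := ⟪mulρinv u, v⟫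

/-- the energy functional
`ℰ(q)(t) = ½ A(j_ω q̇(t), j_ω q̇(t)) + ½ (div j_ω⁺ q(t), div j_ω⁺ q(t))_ρ`. -/
def energy (mulω : H →L[ℝ] H) (dvg : H →ₗ[ℝ] U) (Ainv Vinv : H →L[ℝ] H)
    (mulρinv : U →L[ℝ] U) (q q' : ℝ → H × H) (t : ℝ) : ℝ :=
  (1 / 2) * Abil Ainv Vinv (jomega mulω (q' t)) (jomega mulω (q' t)) +
  (1 / 2) * rinner mulρinv (dvg (jplus mulω (q t))) (dvg (jplus mulω (q t)))

/-- the `H¹(0,T; L²)`-norm of `F` (whose derivative is `F'`). -/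
def H1norm (T : ℝ) (F F' : ℝ → U) : ℝ :=
  Real.sqrt (∫ t in Ioc (0 : ℝ) T, (‖F t‖ ^ 2 + ‖F' t‖ ^ 2))

/-- the `H³(0,T; ·)`-norm of `g` (whose successive derivatives are `g'`, `g''`, `g'''`). -/
def H3norm {G : Type*} [NormedAddCommGroup G] (T : ℝ) (g g' g'' g''' : ℝ → G) : ℝ :=
  Real.sqrt (∫ t in Ioc (0 : ℝ) T,
    (‖g t‖ ^ 2 + ‖g' t‖ ^ 2 + ‖g'' t‖ ^ 2 + ‖g''' t‖ ^ 2))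

/-- membership in the discrete space
`𝔖_h = {q ∈ [P_k(T_h)]^{d×d} × [P_k^V(T_h)]^{d×d} : j_ω⁺ q ∈ W_h}`. -/
def memSh (Xh XhV Wh : Submodule ℝ H) (mulω : H →L[ℝ] H) (q : H × H) : Prop :=
  q.1 ∈ Xh ∧ q.2 ∈ XhV ∧ jplus mulω q ∈ Wh

/-- the solution concept for problem (★): `p ∈ W(𝔖_sym, 𝔖'_sym)` with
`d/dt A(j_ω ṗ + π₂ p, j_ω q) + (div j_ω⁺ p, div j_ω⁺ q)_ρ
   = -(F, div j_ω⁺ q)_ρ + ⟨g̈, (j_ω⁺ q) n⟩_Γ` for all `q ∈ 𝔖_sym`,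
together with the initial conditions `p(0) = p₀`, `ṗ(0) = p₁`. -/
def IsSolutionStar {G : Type*} [NormedAddCommGroup G] [InnerProductSpace ℝ G]
    (T : ℝ) (HV Hdiv Hsym : Submodule ℝ H) (mulω : H →L[ℝ] H) (dvg : H →ₗ[ℝ] U)
    (Ainv Vinv : H →L[ℝ] H) (mulρinv : U →L[ℝ] U)
    (ntr : H →ₗ[ℝ] G →ₗ[ℝ] ℝ) (F : ℝ → U) (g'' : ℝ → G)
    (p₀ p₁ : H × H) (p p' : ℝ → H × H) : Prop :=
  (∀ t : ℝ, HasDerivAt p (p' t) t) ∧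
  (∀ t ∈ Icc (0 : ℝ) T, memSsym HV Hdiv Hsym mulω (p t)) ∧
  p 0 = p₀ ∧ p' 0 = p₁ ∧
  ∀ q : H × H, memSsym HV Hdiv Hsym mulω q → ∀ t ∈ Icc (0 : ℝ) T,
    HasDerivAt
      (fun s => Abil Ainv Vinv (jomega mulω (p' s) + pi2 (p s)) (jomega mulω q))
      (-(rinner mulρinv (F t) (dvg (jplus mulω q))) + ntr (jplus mulω q) (g'' t) -
        rinner mulρinv (dvg (jplus mulω (p t))) (dvg (jplus mulω q))) t

/-- the solution concept for the extended formulation including the rotation `r`. -/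
def IsExtSolution {G : Type*} [NormedAddCommGroup G] [InnerProductSpace ℝ G]
    (T : ℝ) (HV Hdiv Q : Submodule ℝ H) (mulω : H →L[ℝ] H) (dvg : H →ₗ[ℝ] U)
    (Ainv Vinv : H →L[ℝ] H) (mulρinv : U →L[ℝ] U)
    (ntr : H →ₗ[ℝ] G →ₗ[ℝ] ℝ) (F : ℝ → U) (g'' : ℝ → G)
    (p₀ p₁ : H × H) (p p' : ℝ → H × H) (r : ℝ → H) : Prop :=
  (∀ t : ℝ, HasDerivAt p (p' t) t) ∧
  (∀ t ∈ Icc (0 : ℝ) T, memS HV Hdiv mulω (p t)) ∧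
  p 0 = p₀ ∧ p' 0 = p₁ ∧
  Continuous r ∧ (∀ t : ℝ, r t ∈ Q) ∧ r 0 = 0 ∧
  (∀ q : H × H, memS HV Hdiv mulω q → ∀ t ∈ Icc (0 : ℝ) T,
    HasDerivAt
      (fun s => Abil Ainv Vinv (jomega mulω (p' s) + pi2 (p s)) (jomega mulω q) +
        ⟪r s, jplus mulω q⟫)
      (-(rinner mulρinv (F t) (dvg (jplus mulω q))) + ntr (jplus mulω q) (g'' t) -
        rinner mulρinv (dvg (jplus mulω (p t))) (dvg (jplus mulω q))) t) ∧
  (∀ s ∈ Q, ∀ t ∈ Icc (0 : ℝ) T, ⟪s, jplus mulω (p t)⟫ = 0)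

/-- the discrete mixed problem defining the elliptic projector `Ξ_h p := pt`. -/
def IsDiscreteProj (Xh XhV Wh Qh : Submodule ℝ H) (Uh : Submodule ℝ U)
    (mulω : H →L[ℝ] H) (dvg : H →ₗ[ℝ] U) (mulρinv : U →L[ℝ] U)
    (p pt : H × H) (rt : H) (ut : U) : Prop :=
  memSh Xh XhV Wh mulω pt ∧ rt ∈ Qh ∧ ut ∈ Uh ∧
  (∀ q : H × H, memSh Xh XhV Wh mulω q →
    ⟪pt.1, q.1⟫ + ⟪pt.2, q.2⟫ + ⟪rt, jplus mulω q⟫ +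
      rinner mulρinv ut (dvg (jplus mulω q)) = ⟪p.1, q.1⟫ + ⟪p.2, q.2⟫) ∧
  (∀ s ∈ Qh, ∀ v ∈ Uh,
    ⟪s, jplus mulω pt⟫ + rinner mulρinv v (dvg (jplus mulω pt)) =
      ⟪s, jplus mulω p⟫ + rinner mulρinv v (dvg (jplus mulω p)))

end Defs

/-- discrete inf-sup condition (31): there exists `β* > 0`,
independent of the mesh size `h`, such that for all `(s, v) ∈ ℚ_h × U_h`,
`sup_{0 ≠ q ∈ 𝔖_h} [(s, j_ω⁺ q) + (v, div j_ω⁺ q)] / ‖q‖_𝔖 ≥ β* (‖s‖₀ + ‖v‖₀)`.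

Here `ι` indexes the family of shape-regular meshes `T_h` compatible with the
partition of `Ω̄`; `Xh`, `XhV`, `Wh`, `Qh`, `Uh` model the finite element
spaces `[P_k(T_h)]^{d×d}`, `[P_k^V(T_h)]^{d×d}`, `W_h`, `ℚ_h`, `U_h` of the
Arnold–Falk–Winther family (`k ≥ 1`), whose uniform inf-sup condition is the
hypothesis `hAFW`. -/
theorem discrete_infsup
    {H : Type*} [NormedAddCommGroup H] [InnerProductSpace ℝ H] [CompleteSpace H]
    {U : Type*} [NormedAddCommGroup U] [InnerProductSpace ℝ U] [CompleteSpace U]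
    (ι : Type*)
    (HV Hdiv Q : Submodule ℝ H) (mulω : H →L[ℝ] H) (dvg : H →ₗ[ℝ] U)
    (Xh XhV Wh Qh : ι → Submodule ℝ H) (Uh : ι → Submodule ℝ U)
    (hWdiv : ∀ i, Wh i ≤ Hdiv) (hWX : ∀ i, Wh i ≤ Xh i)
    (hXV : ∀ i, XhV i ≤ HV) (hQh : ∀ i, Qh i ≤ Q)
    -- uniform inf-sup condition of the Arnold–Falk–Winther element for {W_h, ℚ_h × U_h}
    (hAFW : ∃ κ > 0, ∀ i, ∀ s ∈ Qh i, ∀ v ∈ Uh i,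
      κ * (‖s‖ + ‖v‖) ≤
        sSup {x : ℝ | ∃ τ ∈ Wh i, τ ≠ 0 ∧
          x = (⟪s, τ⟫ + ⟪v, dvg τ⟫) / hdivNorm dvg τ}) :
    ∃ β > 0, ∀ i, ∀ s ∈ Qh i, ∀ v ∈ Uh i,
      β * (‖s‖ + ‖v‖) ≤
        sSup {x : ℝ | ∃ q : H × H, memSh (Xh i) (XhV i) (Wh i) mulω q ∧ q ≠ 0 ∧
          x = (⟪s, jplus mulω q⟫ + ⟪v, dvg (jplus mulω q)⟫) / Snorm mulω dvg q} := by
  obtain ⟨κ, hκ, hA⟩ := hAFW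
  refine ⟨κ, hκ, fun i s hs v hv => ?_⟩
  set S' := {x : ℝ | ∃ q : H × H, memSh (Xh i) (XhV i) (Wh i) mulω q ∧ q ≠ 0 ∧
      x = (⟪s, jplus mulω q⟫ + ⟪v, dvg (jplus mulω q)⟫) / Snorm mulω dvg q} with hS'
  -- S' is bounded above by 2 (‖s‖ + ‖v‖)
  have hbdd : BddAbove S' := by
    refine ⟨2 * (‖s‖ + ‖v‖), ?_⟩
    rintro x ⟨q, hq, hq0, rfl⟩
    have hnn : (0 : ℝ) ≤ 2 * (‖s‖ + ‖v‖) := by positivity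
    have hN0 : 0 ≤ Snorm mulω dvg q := Real.sqrt_nonneg _
    rcases eq_or_lt_of_le hN0 with h0 | hpos
    · rw [← h0, div_zero]; exact hnn
    · rw [div_le_iff₀ hpos]
      set N := Snorm mulω dvg q with hN
      set w := jplus mulω q with hw
      have e1 : (0 : ℝ) ≤ ‖q.1‖ ^ 2 := sq_nonneg _
      have e2 : (0 : ℝ) ≤ ‖mulω q.2‖ ^ 2 := sq_nonneg _
      have e3 : (0 : ℝ) ≤ ‖dvg (jplus mulω q)‖ ^ 2 := sq_nonneg _
      have h1 : ‖q.1‖ ≤ N := by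
        rw [hN, Snorm]
        calc ‖q.1‖ = Real.sqrt (‖q.1‖ ^ 2) := (Real.sqrt_sq (norm_nonneg _)).symm
          _ ≤ _ := Real.sqrt_le_sqrt (by linarith)
      have h2 : ‖mulω q.2‖ ≤ N := by
        rw [hN, Snorm]
        calc ‖mulω q.2‖ = Real.sqrt (‖mulω q.2‖ ^ 2) :=
              (Real.sqrt_sq (norm_nonneg _)).symm
          _ ≤ _ := Real.sqrt_le_sqrt (by linarith)
      have h3 : ‖dvg w‖ ≤ N := by
        rw [hN, Snorm, hw]
        calc ‖dvg (jplus mulω q)‖ = Real.sqrt (‖dvg (jplus mulω q)‖ ^ 2) :=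
              (Real.sqrt_sq (norm_nonneg _)).symm
          _ ≤ _ := Real.sqrt_le_sqrt (by linarith)
      have hwle : ‖w‖ ≤ 2 * N := by
        have := norm_add_le q.1 (mulω q.2)
        rw [hw, jplus]; linarith
      calc ⟪s, w⟫ + ⟪v, dvg w⟫ ≤ ‖s‖ * ‖w‖ + ‖v‖ * ‖dvg w‖ :=
            add_le_add (real_inner_le_norm _ _) (real_inner_le_norm _ _)
        _ ≤ ‖s‖ * (2 * N) + ‖v‖ * N := by
            exact add_le_add (mul_le_mul_of_nonneg_left hwle (norm_nonneg s))
              (mul_le_mul_of_nonneg_left h3 (norm_nonneg v))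
        _ ≤ 2 * (‖s‖ + ‖v‖) * N := by nlinarith [norm_nonneg s, norm_nonneg v, hN0]
  -- the AFW test set is included in S' (take q = (τ, 0))
  have hsub : {x : ℝ | ∃ τ ∈ Wh i, τ ≠ 0 ∧
      x = (⟪s, τ⟫ + ⟪v, dvg τ⟫) / hdivNorm dvg τ} ⊆ S' := by
    rintro x ⟨τ, hτW, hτ0, rfl⟩
    refine ⟨(τ, 0), ⟨hWX i hτW, (XhV i).zero_mem, ?_⟩, ?_, ?_⟩
    · simpa [jplus] using hτW
    · simp [Prod.ext_iff, hτ0]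
    · simp [jplus, Snorm, hdivNorm]
  by_cases hzero : s = 0 ∧ v = 0
  · obtain ⟨rfl, rfl⟩ := hzero
    simp only [norm_zero, add_zero, mul_zero]
    rcases Set.eq_empty_or_nonempty S' with he | ⟨x, hx⟩
    · rw [he, Real.sSup_empty]
    · have hx0 : x = 0 := by
        obtain ⟨q, -, -, rfl⟩ := hx
        simp
      rw [← hx0]
      exact le_csSup hbdd hx
  · have hpos : 0 < ‖s‖ + ‖v‖ := by
      rcases not_and_or.mp hzero with h | h
      · have := norm_pos_iff.mpr h; linarith [norm_nonneg v]
      · have := norm_pos_iff.mpr h; linarith [norm_nonneg s]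
    have hT := hA i s hs v hv
    have hTne : {x : ℝ | ∃ τ ∈ Wh i, τ ≠ 0 ∧
        x = (⟪s, τ⟫ + ⟪v, dvg τ⟫) / hdivNorm dvg τ}.Nonempty := by
      by_contra h
      rw [Set.not_nonempty_iff_eq_empty] at h
      rw [h, Real.sSup_empty] at hT
      nlinarith
    exact hT.trans (csSup_le_csSup hbdd hTne hsub)
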